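/- Let W : ℝ^{3×3} → [0,∞) satisfy (H₁): β'|ξ| ≤ W(ξ) ≤ β(1+|ξ|), (H₂): |W^∞(ξ) − W(ξ)| ≤ C(1+|ξ|^{1−r}) for some r ∈ (0,1), and a global Lipschitz condition. Then for every z, b ∈ ℝ³ and ν ∈ S¹, the recession function of Q*W agrees with Q* of the recession function of W on rank-one-plus-vector arguments: (Q*W)^∞(z⊗ν|b) = Q*(W^∞)(z⊗ν|b). -/

import Mathlib

open MeasureTheory Filter Topology

noncomputable section

abbrev M33 := Fin 3 → Fin 3 → ℝ
abbrev M32 := Fin 3 → Fin 2 → ℝ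
abbrev V3 := Fin 3 → ℝ
abbrev X3 := Fin 3 → ℝ
abbrev X2 := Fin 2 → ℝ

/-- The unit cell `Q' × I = (-1/2,1/2)³`. -/
def cube3 : Set X3 := {x | ∀ i, x i ∈ Set.Ioo (-(1:ℝ)/2) (1/2)}

/-- The transverse direction `e₃`. -/
def e3 : X3 := Pi.single 2 1

/-- The in-plane gradient `∇_α φ` (a 3×2 matrix). -/
def gradA (φ : X3 → V3) (x : X3) : M32 :=
  fun i j => fderiv ℝ (fun y => φ y i) x (Pi.single (Fin.castSucc j) 1)

/-- The transverse derivative `∂₃ φ`. -/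
def d3 (φ : X3 → V3) (x : X3) : V3 :=
  fun i => fderiv ℝ (fun y => φ y i) x e3

/-- The 3×3 matrix `(A | c)` whose first two columns form `A` and last column is `c`. -/
def paste (A : M32) (c : V3) : M33 :=
  fun i k => if h : (k : ℕ) < 2 then A i ⟨k, h⟩ else c i

/-- `Q'`-periodicity in the in-plane variables. -/
def PeriodicInPlane (φ : X3 → V3) : Prop :=
  ∀ x : X3, ∀ j : Fin 2, φ (x + Pi.single (Fin.castSucc j) 1) = φ x

/-- The dimension-reduction energy density `Q*W(ξ̄|b)`. -/
def QstarW (W : M33 → ℝ) (ξ : M32) (b : V3) : ℝ :=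
  sInf {E : ℝ | ∃ lam : ℝ, ∃ φ : X3 → V3, 0 < lam ∧ ContDiff ℝ 1 φ ∧
    PeriodicInPlane φ ∧
    (∀ i, lam * ∫ x in cube3, d3 φ x i = b i) ∧
    E = ∫ x in cube3, W (paste (ξ + gradA φ x) (lam • d3 φ x))}


/-- The recession function of a function of 3x3 matrices. -/
def recession (W : M33 → ℝ) (ξ : M33) : ℝ :=
  Filter.limsup (fun t : ℝ => W (t • ξ) / t) Filter.atTop

/-- The recession function of the dimension-reduction density `Q*W`. -/
def recession2 (F : M32 → V3 → ℝ) (ξ : M32) (b : V3) : ℝ :=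
  Filter.limsup (fun t : ℝ => F (t • ξ) (t • b) / t) Filter.atTop

/-- The rank-one 3x2 matrix `z ⊗ ν`. -/
def tens (z : V3) (ν : X2) : M32 := fun i j => z i * ν j



section Aux

lemma cube3_eq : cube3 = Set.univ.pi fun _ : Fin 3 => Set.Ioo (-(1:ℝ)/2) (1/2) := by
  ext x; simp [cube3, Set.mem_pi]

lemma volume_cube3 : volume cube3 = 1 := by
  rw [cube3_eq, volume_pi_pi]
  simp [Real.volume_Ioo]; norm_num

lemma integrableOn_cube3 {f : X3 → ℝ} (hf : Continuous f) : IntegrableOn f cube3 := by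
  have hK : IsCompact (Set.univ.pi fun _ : Fin 3 => Set.Icc (-(1:ℝ)/2) (1/2)) :=
    isCompact_univ_pi fun _ => isCompact_Icc
  refine (hf.continuousOn.integrableOn_compact hK).mono_set ?_
  rw [cube3_eq]
  exact Set.pi_mono fun i _ => Set.Ioo_subset_Icc_self

lemma setIntegral_cube3_const (c : ℝ) : ∫ _ in cube3, c = c := by
  rw [setIntegral_const, Measure.real, volume_cube3]; simp

lemma coord_contDiff {φ : X3 → V3} (h : ContDiff ℝ 1 φ) (i : Fin 3) :
    ContDiff ℝ 1 fun y => φ y i := contDiff_pi.mp h i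

lemma fderiv_coord_smul {φ : X3 → V3} (h : ContDiff ℝ 1 φ) (t : ℝ) (i : Fin 3) (x : X3) :
    fderiv ℝ (fun y => (t • φ) y i) x = t • fderiv ℝ (fun y => φ y i) x := by
  have : (fun y => (t • φ) y i) = fun y => t * φ y i := rfl
  rw [this, fderiv_const_mul (((coord_contDiff h i).differentiable one_ne_zero) x)]

lemma fderiv_coord_smul_apply {φ : X3 → V3} (h : ContDiff ℝ 1 φ) (t : ℝ) (i : Fin 3) (x v : X3) :
    fderiv ℝ (fun y => (t • φ) y i) x v = t * fderiv ℝ (fun y => φ y i) x v := by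
  rw [fderiv_coord_smul h t i x]; rfl

lemma gradA_smul {φ : X3 → V3} (h : ContDiff ℝ 1 φ) (t : ℝ) (x : X3) :
    gradA (t • φ) x = t • gradA φ x := by
  funext i j
  show fderiv ℝ (fun y => (t • φ) y i) x _ = _
  rw [fderiv_coord_smul_apply h t i x]; rfl

lemma d3_smul {φ : X3 → V3} (h : ContDiff ℝ 1 φ) (t : ℝ) (x : X3) :
    d3 (t • φ) x = t • d3 φ x := by
  funext i
  show fderiv ℝ (fun y => (t • φ) y i) x _ = _
  rw [fderiv_coord_smul_apply h t i x]; rfl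

def MM (ξ : M32) (lam : ℝ) (φ : X3 → V3) (x : X3) : M33 :=
  paste (ξ + gradA φ x) (lam • d3 φ x)

lemma paste_smul (t : ℝ) (A : M32) (c : V3) : paste (t • A) (t • c) = t • paste A c := by
  funext i k
  by_cases h : (k : ℕ) < 2 <;> simp [paste, h]

lemma MM_smul {φ : X3 → V3} (h : ContDiff ℝ 1 φ) (ξ : M32) (lam t : ℝ) (x : X3) :
    MM (t • ξ) lam (t • φ) x = t • MM ξ lam φ x := by
  unfold MM
  rw [gradA_smul h, d3_smul h, smul_comm lam t, ← smul_add, ← paste_smul]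

lemma MM_continuous {φ : X3 → V3} (h : ContDiff ℝ 1 φ) (ξ : M32) (lam : ℝ) :
    Continuous fun x => MM ξ lam φ x := by
  have hfd : ∀ i : Fin 3, Continuous fun x => fderiv ℝ (fun y => φ y i) x :=
    fun i => (coord_contDiff h i).continuous_fderiv one_ne_zero
  apply continuous_pi; intro i; apply continuous_pi; intro k
  by_cases hk : (k : ℕ) < 2
  · have : (fun x => MM ξ lam φ x i k) = fun x =>
        ξ i ⟨k, hk⟩ + fderiv ℝ (fun y => φ y i) x (Pi.single (Fin.castSucc ⟨k, hk⟩) 1) := by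
      funext x; simp [MM, paste, hk, gradA]
    rw [this]
    exact continuous_const.add ((hfd i).clm_apply continuous_const)
  · have : (fun x => MM ξ lam φ x i k) = fun x =>
        lam * fderiv ℝ (fun y => φ y i) x e3 := by
      funext x; simp [MM, paste, hk, d3]
    rw [this]
    exact continuous_const.mul ((hfd i).clm_apply continuous_const)

section rec
variable {W : M33 → ℝ} {β' β L : ℝ}
  (hβ' : 0 < β')
  (hlower : ∀ ξ : M33, β' * ‖ξ‖ ≤ W ξ)
  (hupper : ∀ ξ : M33, W ξ ≤ β * (1 + ‖ξ‖))
  (hLip : ∀ ξ ξ' : M33, |W ξ - W ξ'| ≤ L * ‖ξ - ξ'‖)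

include hβ' hlower in
lemma W_nonneg (ξ : M33) : 0 ≤ W ξ :=
  le_trans (by positivity) (hlower ξ)

include hβ' hlower hupper in
lemma W_div_bounds (ξ : M33) {t : ℝ} (ht : 1 ≤ t) :
    0 ≤ W (t • ξ) / t ∧ W (t • ξ) / t ≤ β * (1 + ‖ξ‖) := by
  have ht0 : (0:ℝ) < t := lt_of_lt_of_le one_pos ht
  have hβ : 0 ≤ β := by
    have := (hlower 0).trans (hupper 0); simpa using this
  constructor
  · exact div_nonneg (W_nonneg hβ' hlower _) ht0.le
  · have h1 : W (t • ξ) ≤ β * (1 + t * ‖ξ‖) := by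
      have := hupper (t • ξ)
      rwa [norm_smul, Real.norm_eq_abs, abs_of_pos ht0] at this
    calc W (t • ξ) / t ≤ β * (1 + t * ‖ξ‖) / t := by gcongr
      _ = β / t + β * ‖ξ‖ := by field_simp
      _ ≤ β * (1 + ‖ξ‖) := by
          have : β / t ≤ β := by
            rw [div_le_iff₀ ht0]; nlinarith
          nlinarith

include hβ' hlower hupper in
lemma rec_bddAbove (ξ : M33) :
    IsBoundedUnder (· ≤ ·) atTop (fun t : ℝ => W (t • ξ) / t) :=
  isBoundedUnder_of_eventually_le (a := β * (1 + ‖ξ‖))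
    ((eventually_ge_atTop 1).mono fun t ht => (W_div_bounds hβ' hlower hupper ξ ht).2)

include hβ' hlower hupper in
lemma rec_bddBelow (ξ : M33) :
    IsBoundedUnder (· ≥ ·) atTop (fun t : ℝ => W (t • ξ) / t) :=
  isBoundedUnder_of_eventually_ge (a := 0)
    ((eventually_ge_atTop 1).mono fun t ht => (W_div_bounds hβ' hlower hupper ξ ht).1)

include hβ' hlower hupper in
lemma recession_le (ξ : M33) : recession W ξ ≤ β * (1 + ‖ξ‖) :=
  limsup_le_of_le ((rec_bddBelow hβ' hlower hupper ξ).isCoboundedUnder_le)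
    ((eventually_ge_atTop 1).mono fun t ht => (W_div_bounds hβ' hlower hupper ξ ht).2)

include hβ' hlower hupper in
lemma recession_ge (ξ : M33) : β' * ‖ξ‖ ≤ recession W ξ := by
  apply le_limsup_of_frequently_le _ (rec_bddAbove hβ' hlower hupper ξ)
  apply Eventually.frequently
  filter_upwards [eventually_ge_atTop 1] with t ht
  have ht0 : (0:ℝ) < t := lt_of_lt_of_le one_pos ht
  rw [le_div_iff₀ ht0]
  calc β' * ‖ξ‖ * t = β' * (t * ‖ξ‖) := by ring
    _ = β' * ‖t • ξ‖ := by rw [norm_smul, Real.norm_eq_abs, abs_of_pos ht0]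
    _ ≤ W (t • ξ) := hlower _

include hβ' hlower hupper hLip in
lemma recession_lip (ξ ξ' : M33) : |recession W ξ - recession W ξ'| ≤ L * ‖ξ - ξ'‖ := by
  have key : ∀ η η' : M33, recession W η ≤ recession W η' + L * ‖η - η'‖ := by
    intro η η'
    have hev : ∀ᶠ t in atTop, W (t • η) / t ≤ W (t • η') / t + L * ‖η - η'‖ := by
      filter_upwards [eventually_ge_atTop 1] with t ht
      have ht0 : (0:ℝ) < t := lt_of_lt_of_le one_pos ht
      have h1 : W (t • η) - W (t • η') ≤ L * (t * ‖η - η'‖) := by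
        have := (abs_le.mp (hLip (t • η) (t • η'))).2
        rwa [← smul_sub, norm_smul, Real.norm_eq_abs, abs_of_pos ht0] at this
      rw [div_add' _ _ _ ht0.ne', div_le_div_iff_of_pos_right ht0]
      nlinarith
    calc recession W η ≤ limsup (fun t : ℝ => W (t • η') / t + L * ‖η - η'‖) atTop := by
          refine limsup_le_limsup hev
            ((rec_bddBelow hβ' hlower hupper η).isCoboundedUnder_le) ?_
          apply isBoundedUnder_of_eventually_le (a := β * (1 + ‖η'‖) + L * ‖η - η'‖)
          filter_upwards [eventually_ge_atTop 1] with t ht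
          exact add_le_add_left (W_div_bounds hβ' hlower hupper η' ht).2 _
      _ = recession W η' + L * ‖η - η'‖ :=
          limsup_add_const atTop _ _ (rec_bddAbove hβ' hlower hupper η')
            ((rec_bddBelow hβ' hlower hupper η').isCoboundedUnder_le)
  rw [abs_sub_le_iff]
  refine ⟨by linarith [key ξ ξ'], ?_⟩
  have := key ξ' ξ
  rw [norm_sub_rev] at this
  linarith

include hβ' hlower hupper in
lemma recession_smul (ξ : M33) {s : ℝ} (hs : 0 < s) :
    recession W (s • ξ) = s * recession W ξ := by
  set F : ℝ → ℝ := fun u => W (u • ξ) / u with hF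
  have hGbddA : IsBoundedUnder (· ≤ ·) atTop fun t : ℝ => F (t * s) := by
    apply isBoundedUnder_of_eventually_le (a := β * (1 + ‖ξ‖))
    filter_upwards [eventually_ge_atTop (1/s)] with t ht
    exact (W_div_bounds hβ' hlower hupper ξ ((div_le_iff₀ hs).mp ht)).2
  have hGbddB : IsBoundedUnder (· ≥ ·) atTop fun t : ℝ => F (t * s) := by
    apply isBoundedUnder_of_eventually_ge (a := 0)
    filter_upwards [eventually_ge_atTop (1/s)] with t ht
    exact (W_div_bounds hβ' hlower hupper ξ ((div_le_iff₀ hs).mp ht)).1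
  have stepA : recession W (s • ξ) = limsup (fun t : ℝ => s * F (t * s)) atTop := by
    apply limsup_congr
    filter_upwards [eventually_ge_atTop 1] with t ht
    have ht0 : (0:ℝ) < t := lt_of_lt_of_le one_pos ht
    rw [smul_smul, hF]
    simp only
    rw [mul_comm t s]
    field_simp
  have stepC : limsup (fun t : ℝ => s * F (t * s)) atTop
      = s * limsup (fun t : ℝ => F (t * s)) atTop := by
    have := Monotone.map_limsup_of_continuousAt (F := atTop) (f := fun x : ℝ => s * x)
      (fun a b hab => by exact mul_le_mul_of_nonneg_left hab hs.le)
      (fun t : ℝ => F (t * s)) ((continuous_mul_left s).continuousAt) hGbddA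
      hGbddB.isCoboundedUnder_le
    exact this.symm
  have stepB : limsup (fun t : ℝ => F (t * s)) atTop = limsup F atTop := by
    have hmap : Filter.map (fun t : ℝ => t * s) atTop = atTop :=
      OrderIso.map_atTop (OrderIso.mulRight₀ s hs)
    rw [show (fun t : ℝ => F (t * s)) = F ∘ (fun t : ℝ => t * s) from rfl]
    rw [Filter.limsup, Filter.limsup, ← Filter.map_map, hmap]
  rw [stepA, stepC, stepB]; rfl

include hLip in
lemma W_continuous : Continuous W := by
  have : LipschitzWith (Real.toNNReal L) W := LipschitzWith.of_dist_le_mul fun x y => by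
    rw [Real.dist_eq, dist_eq_norm]
    exact (hLip x y).trans (mul_le_mul_of_nonneg_right (Real.le_coe_toNNReal L) (norm_nonneg _))
  exact this.continuous

include hβ' hlower hupper hLip in
lemma recession_continuous : Continuous (recession W) := by
  have : LipschitzWith (Real.toNNReal L) (recession W) :=
    LipschitzWith.of_dist_le_mul fun x y => by
      rw [Real.dist_eq, dist_eq_norm]
      exact (recession_lip hβ' hlower hupper hLip x y).trans
        (mul_le_mul_of_nonneg_right (Real.le_coe_toNNReal L) (norm_nonneg _))
  exact this.continuous

variable {C r : ℝ} (hC : 0 < C) (hr : r ∈ Set.Ioo (0:ℝ) 1)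
  (hH2 : ∀ ξ : M33, |recession W ξ - W ξ| ≤ C * (1 + ‖ξ‖ ^ (1 - r)))

lemma rpow_aux (hr : r ∈ Set.Ioo (0:ℝ) 1) {a : ℝ} (ha : 0 ≤ a) : a ^ (1 - r) ≤ 1 + a := by
  rcases le_total a 1 with h | h
  · have := Real.rpow_le_one ha h (by linarith [hr.2] : (0:ℝ) ≤ 1 - r)
    linarith
  · have h2 := Real.rpow_le_rpow_of_exponent_le h (by linarith [hr.1] : 1 - r ≤ 1)
    rw [Real.rpow_one] at h2
    linarith

include hβ' hlower hupper hC hr hH2 in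
lemma pointwise_est (η : M33) {t : ℝ} (ht : 1 ≤ t) :
    |W (t • η) / t - recession W η| ≤ C / t + (C * (t ^ (1 - r) / t)) * (1 + ‖η‖) := by
  have ht0 : (0:ℝ) < t := lt_of_lt_of_le one_pos ht
  have h1 : recession W (t • η) = t * recession W η :=
    recession_smul hβ' hlower hupper η ht0
  have h2 : W (t • η) / t - recession W η = (W (t • η) - recession W (t • η)) / t := by
    rw [h1]; field_simp
  rw [h2, abs_div, abs_of_pos ht0]
  have h3 : |W (t • η) - recession W (t • η)| ≤ C * (1 + t ^ (1 - r) * (1 + ‖η‖)) := by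
    rw [abs_sub_comm]
    refine (hH2 (t • η)).trans ?_
    have h4 : ‖t • η‖ ^ (1 - r) = t ^ (1 - r) * ‖η‖ ^ (1 - r) := by
      rw [norm_smul, Real.norm_eq_abs, abs_of_pos ht0, Real.mul_rpow ht0.le (norm_nonneg _)]
    rw [h4]
    have h5 : ‖η‖ ^ (1 - r) ≤ 1 + ‖η‖ := rpow_aux hr (norm_nonneg _)
    have h6 : (0:ℝ) ≤ t ^ (1 - r) := Real.rpow_nonneg ht0.le _
    nlinarith [mul_le_mul_of_nonneg_left (mul_le_mul_of_nonneg_left h5 h6) hC.le]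
  calc |W (t • η) - recession W (t • η)| / t ≤ C * (1 + t ^ (1 - r) * (1 + ‖η‖)) / t := by
        gcongr
    _ = C / t + (C * (t ^ (1 - r) / t)) * (1 + ‖η‖) := by field_simp

include hβ' hlower hupper hLip hC hr hH2 in
lemma int_est {m : X3 → M33} (hm : Continuous m) {t : ℝ} (ht : 1 ≤ t) :
    |(∫ x in cube3, W (t • m x)) / t - ∫ x in cube3, recession W (m x)|
      ≤ C / t + (C * (t ^ (1 - r) / t)) * (1 + ∫ x in cube3, ‖m x‖) := by
  have hWc := W_continuous hLip
  have hRc := recession_continuous hβ' hlower hupper hLip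
  have i1 : IntegrableOn (fun x => W (t • m x) / t) cube3 :=
    integrableOn_cube3 ((hWc.comp (hm.const_smul t)).div_const t)
  have i2 : IntegrableOn (fun x => recession W (m x)) cube3 :=
    integrableOn_cube3 (hRc.comp hm)
  have i3 : IntegrableOn (fun x => ‖m x‖) cube3 := integrableOn_cube3 hm.norm
  have i4 : IntegrableOn (fun x => C / t + C * (t ^ (1 - r) / t) * (1 + ‖m x‖)) cube3 :=
    integrableOn_cube3 (continuous_const.add (continuous_const.mul
      (continuous_const.add hm.norm)))
  rw [← integral_div, ← MeasureTheory.integral_sub i1 i2]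
  calc |∫ x in cube3, (W (t • m x) / t - recession W (m x))|
      ≤ ∫ x in cube3, |W (t • m x) / t - recession W (m x)| := by
        simpa [Real.norm_eq_abs] using norm_integral_le_integral_norm
          (μ := volume.restrict cube3) (fun x => W (t • m x) / t - recession W (m x))
    _ ≤ ∫ x in cube3, (C / t + C * (t ^ (1 - r) / t) * (1 + ‖m x‖)) :=
        integral_mono (i1.sub i2).abs i4
          (fun x => pointwise_est hβ' hlower hupper hC hr hH2 (m x) ht)
    _ = C / t + (C * (t ^ (1 - r) / t)) * (1 + ∫ x in cube3, ‖m x‖) := by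
        rw [integral_add (integrableOn_cube3 continuous_const)
          (integrableOn_cube3 (f := fun x => C * (t ^ (1 - r) / t) * (1 + ‖m x‖))
            (continuous_const.mul (continuous_const.add hm.norm))),
          setIntegral_cube3_const, integral_const_mul,
          integral_add (integrableOn_cube3 continuous_const) i3,
          setIntegral_cube3_const]

end rec

/-- admissibility -/
def Adm (ξ : M32) (b : V3) (lam : ℝ) (φ : X3 → V3) : Prop :=
  0 < lam ∧ ContDiff ℝ 1 φ ∧ PeriodicInPlane φ ∧
    (∀ i, lam * ∫ x in cube3, d3 φ x i = b i)

def ES (V : M33 → ℝ) (ξ : M32) (b : V3) : Set ℝ :=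
  {E : ℝ | ∃ lam : ℝ, ∃ φ : X3 → V3, 0 < lam ∧ ContDiff ℝ 1 φ ∧
    PeriodicInPlane φ ∧
    (∀ i, lam * ∫ x in cube3, d3 φ x i = b i) ∧
    E = ∫ x in cube3, V (paste (ξ + gradA φ x) (lam • d3 φ x))}

lemma QstarW_eq (V : M33 → ℝ) (ξ : M32) (b : V3) : QstarW V ξ b = sInf (ES V ξ b) := rfl

lemma mem_ES {V : M33 → ℝ} {ξ : M32} {b : V3} {lam : ℝ} {φ : X3 → V3}
    (h : Adm ξ b lam φ) : (∫ x in cube3, V (MM ξ lam φ x)) ∈ ES V ξ b :=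
  ⟨lam, φ, h.1, h.2.1, h.2.2.1, h.2.2.2, rfl⟩

lemma ES_bddBelow {V : M33 → ℝ} (hV : ∀ η, 0 ≤ V η) (ξ : M32) (b : V3) :
    BddBelow (ES V ξ b) := by
  refine ⟨0, fun E hE => ?_⟩
  obtain ⟨lam, φ, _, _, _, _, hEeq⟩ := hE
  rw [hEeq]
  exact integral_nonneg fun x => hV _

lemma ES_nonneg {V : M33 → ℝ} (hV : ∀ η, 0 ≤ V η) {ξ : M32} {b : V3} {E : ℝ}
    (hE : E ∈ ES V ξ b) : 0 ≤ E := by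
  obtain ⟨lam, φ, _, _, _, _, hEeq⟩ := hE
  rw [hEeq]
  exact integral_nonneg fun x => hV _

/-- the test pair -/
def φtest (b : V3) : X3 → V3 := fun y => y 2 • b

lemma fderiv_φtest (b : V3) (i : Fin 3) (x : X3) :
    fderiv ℝ (fun y => φtest b y i) x =
      b i • (ContinuousLinearMap.proj (R := ℝ) (φ := fun _ : Fin 3 => ℝ) 2) := by
  have h := ((ContinuousLinearMap.proj (R := ℝ) (φ := fun _ : Fin 3 => ℝ)
      (2 : Fin 3)).hasFDerivAt (x := x)).mul_const (b i)
  exact h.fderiv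

lemma castSucc_ne_two (j : Fin 2) : (Fin.castSucc j : Fin 3) ≠ 2 := by
  apply Fin.ne_of_val_ne
  simp [Fin.castSucc]
  omega

lemma d3_φtest (b : V3) (x : X3) : d3 (φtest b) x = b := by
  funext i
  rw [d3, fderiv_φtest]
  show b i * e3 2 = b i
  rw [show e3 2 = 1 from Pi.single_eq_same 2 1, mul_one]

lemma gradA_φtest (b : V3) (x : X3) (i : Fin 3) (j : Fin 2) : gradA (φtest b) x i j = 0 := by
  rw [gradA, fderiv_φtest]
  show b i * (Pi.single (Fin.castSucc j) 1 : X3) 2 = 0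
  rw [Pi.single_eq_of_ne (by
    apply Fin.ne_of_val_ne; simp; omega : (2 : Fin 3) ≠ Fin.castSucc j)]
  simp

lemma adm_test (ξ : M32) (b : V3) : Adm ξ b 1 (φtest b) := by
  refine ⟨one_pos, ?_, ?_, ?_⟩
  · apply contDiff_pi.mpr
    intro i
    exact ((ContinuousLinearMap.proj (R := ℝ) (φ := fun _ : Fin 3 => ℝ)
      (2 : Fin 3)).contDiff).mul contDiff_const
  · intro x j
    funext i
    show ((x + Pi.single (Fin.castSucc j) 1 : X3) 2) * b i = x 2 * b i
    rw [Pi.add_apply, Pi.single_eq_of_ne (castSucc_ne_two j).symm, add_zero]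
  · intro i
    simp only [d3_φtest, one_mul]
    exact setIntegral_cube3_const (b i)

lemma MM_test (ξ : M32) (b : V3) (x : X3) : MM ξ 1 (φtest b) x = paste ξ b := by
  unfold MM
  rw [d3_φtest, one_smul]
  have hA : ξ + gradA (φtest b) x = ξ := by
    funext i j
    rw [Pi.add_apply, Pi.add_apply, gradA_φtest, add_zero]
  rw [hA]

lemma adm_smul {ξ : M32} {b : V3} {lam : ℝ} {φ : X3 → V3} (h : Adm ξ b lam φ)
    {t : ℝ} (ht : 0 < t) : Adm (t • ξ) (t • b) lam (t • φ) := by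
  obtain ⟨h1, h2, h3, h4⟩ := h
  refine ⟨h1, ?_, ?_, ?_⟩
  · exact h2.const_smul t
  · intro x j
    show t • φ (x + _) = t • φ x
    rw [h3 x j]
  · intro i
    have heq : ∀ x : X3, d3 (t • φ) x i = t * d3 φ x i := by
      intro x
      rw [d3_smul h2]
      rfl
    calc lam * ∫ x in cube3, d3 (t • φ) x i
        = lam * ∫ x in cube3, t * d3 φ x i := by
          congr 1
          exact integral_congr_ae (Filter.Eventually.of_forall fun x => heq x)
      _ = t * (lam * ∫ x in cube3, d3 φ x i) := by rw [integral_const_mul]; ring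
      _ = (t • b) i := by rw [h4 i]; rfl


section main
variable {W : M33 → ℝ} {β' β L C r : ℝ}

lemma main_tendsto
    (hβ' : 0 < β')
    (hlower : ∀ ξ : M33, β' * ‖ξ‖ ≤ W ξ)
    (hupper : ∀ ξ : M33, W ξ ≤ β * (1 + ‖ξ‖))
    (hC : 0 < C) (hr : r ∈ Set.Ioo (0:ℝ) 1)
    (hH2 : ∀ ξ : M33, |recession W ξ - W ξ| ≤ C * (1 + ‖ξ‖ ^ (1 - r)))
    (hLip : ∀ ξ ξ' : M33, |W ξ - W ξ'| ≤ L * ‖ξ - ξ'‖)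
    (ξ : M32) (b : V3) :
    Tendsto (fun t : ℝ => QstarW W (t • ξ) (t • b) / t) atTop
      (𝓝 (QstarW (recession W) ξ b)) := by
  have hW0 : ∀ η : M33, 0 ≤ W η := W_nonneg hβ' hlower
  have hrec0 : ∀ η : M33, 0 ≤ recession W η := fun η =>
    le_trans (by positivity) (recession_ge hβ' hlower hupper η)
  set Qinf := QstarW (recession W) ξ b with hQinf
  have hQsInf : sInf (ES (recession W) ξ b) = Qinf := rfl
  have herr : ∀ K : ℝ, Tendsto (fun t : ℝ => C / t + (C * (t ^ (1 - r) / t)) * (1 + K))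
      atTop (𝓝 0) := by
    intro K
    have l1 : Tendsto (fun t : ℝ => C / t) atTop (𝓝 0) :=
      tendsto_const_nhds.div_atTop tendsto_id
    have l2 : Tendsto (fun t : ℝ => t ^ (1 - r) / t) atTop (𝓝 0) := by
      apply Tendsto.congr' _ (tendsto_rpow_neg_atTop hr.1)
      filter_upwards [eventually_gt_atTop 0] with t ht
      rw [show -r = (1 - r) - 1 by ring, Real.rpow_sub ht, Real.rpow_one]
    have := l1.add ((l2.const_mul C).mul_const (1 + K))
    simpa using this
  set B := β * (1 + ‖paste ξ b‖) with hB
  have hQt_le : ∀ t : ℝ, 0 < t →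
      QstarW W (t • ξ) (t • b) ≤ W (t • paste ξ b) := by
    intro t ht0
    have hadm := adm_smul (adm_test ξ b) ht0
    have hmem := mem_ES (V := W) hadm
    have heq : (∫ x in cube3, W (MM (t • ξ) 1 (t • φtest b) x)) = W (t • paste ξ b) := by
      have h1 : (∫ x in cube3, W (MM (t • ξ) 1 (t • φtest b) x))
          = ∫ _x in cube3, W (t • paste ξ b) := by
        apply integral_congr_ae
        apply Filter.Eventually.of_forall
        intro x
        beta_reduce
        rw [MM_smul (adm_test ξ b).2.1, MM_test]
      rw [h1]
      exact setIntegral_cube3_const _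
    rw [QstarW_eq]
    exact le_of_le_of_eq (csInf_le (ES_bddBelow hW0 _ _) hmem) heq
  rw [Metric.tendsto_nhds]
  intro ε hε
  have hε4 : 0 < ε / 4 := by linarith
  -- Part 1 : upper bound
  obtain ⟨E0, hE0mem, hE0lt⟩ := Real.lt_sInf_add_pos
    (⟨_, mem_ES (V := recession W) (adm_test ξ b)⟩ : (ES (recession W) ξ b).Nonempty) hε4
  obtain ⟨lam0, φ0, hl0, hcd0, hper0, hcon0, hE0eq⟩ := hE0mem
  have hadm0 : Adm ξ b lam0 φ0 := ⟨hl0, hcd0, hper0, hcon0⟩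
  set m0 := MM ξ lam0 φ0 with hm0
  have hm0c : Continuous m0 := MM_continuous hcd0 ξ lam0
  set N0 := ∫ x in cube3, ‖m0 x‖ with hN0
  have hE0eq' : (∫ x in cube3, recession W (m0 x)) = E0 := hE0eq.symm
  have hup : ∀ᶠ t : ℝ in atTop, QstarW W (t • ξ) (t • b) / t < Qinf + ε / 2 := by
    filter_upwards [eventually_ge_atTop 1, (herr N0).eventually_lt_const hε4]
      with t ht herrt
    have ht0 : (0:ℝ) < t := lt_of_lt_of_le one_pos ht
    have hmem := mem_ES (V := W) (adm_smul hadm0 ht0)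
    have heq : (∫ x in cube3, W (MM (t • ξ) lam0 (t • φ0) x)) = ∫ x in cube3, W (t • m0 x) := by
      apply integral_congr_ae
      apply Filter.Eventually.of_forall
      intro x
      beta_reduce
      rw [hm0, MM_smul hcd0]
    have h2 : QstarW W (t • ξ) (t • b) ≤ ∫ x in cube3, W (t • m0 x) := by
      rw [QstarW_eq]
      exact le_of_le_of_eq (csInf_le (ES_bddBelow hW0 _ _) hmem) heq
    have h3 := (abs_le.mp (int_est hβ' hlower hupper hLip hC hr hH2 hm0c ht)).2
    calc QstarW W (t • ξ) (t • b) / t ≤ (∫ x in cube3, W (t • m0 x)) / t := by gcongr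
      _ < Qinf + ε / 2 := by
          rw [hE0eq'] at h3
          linarith
  -- Part 2 : lower bound
  set K := (B + ε / 4) / β' with hK
  have hlow : ∀ᶠ t : ℝ in atTop, Qinf < QstarW W (t • ξ) (t • b) / t + ε / 2 := by
    filter_upwards [eventually_ge_atTop 1, (herr K).eventually_lt_const hε4]
      with t ht herrt
    have ht0 : (0:ℝ) < t := lt_of_lt_of_le one_pos ht
    obtain ⟨E, hEmem, hElt⟩ := Real.lt_sInf_add_pos
      (⟨_, mem_ES (V := W) (adm_smul (adm_test ξ b) ht0)⟩ :
        (ES W (t • ξ) (t • b)).Nonempty) (show (0:ℝ) < t * (ε / 4) by positivity)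
    obtain ⟨lam, ψ, hl, hcd, hper, hcon, hEeq⟩ := hEmem
    have hadmψ : Adm (t • ξ) (t • b) lam ψ := ⟨hl, hcd, hper, hcon⟩
    have hadmφ : Adm ξ b lam (t⁻¹ • ψ) := by
      have h := adm_smul hadmψ (inv_pos.mpr ht0)
      rwa [inv_smul_smul₀ ht0.ne', inv_smul_smul₀ ht0.ne'] at h
    set φ := t⁻¹ • ψ with hφ
    have hψ : ψ = t • φ := by rw [hφ, smul_inv_smul₀ ht0.ne']
    have hcdφ : ContDiff ℝ 1 φ := hadmφ.2.1
    have hEeq2 : E = ∫ x in cube3, W (t • MM ξ lam φ x) := by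
      rw [hEeq]
      apply integral_congr_ae
      apply Filter.Eventually.of_forall
      intro x
      beta_reduce
      rw [show (paste ((t • ξ) + gradA ψ x) (lam • d3 ψ x)) = MM (t • ξ) lam ψ x from rfl,
        hψ, MM_smul hcdφ]
    set m := MM ξ lam φ with hm
    have hmc : Continuous m := MM_continuous hcdφ ξ lam
    set N := ∫ x in cube3, ‖m x‖ with hN
    have hQtB : QstarW W (t • ξ) (t • b) / t ≤ B := by
      have h1 := hQt_le t ht0
      have h2 := (W_div_bounds hβ' hlower hupper (paste ξ b) ht).2
      calc QstarW W (t • ξ) (t • b) / t ≤ W (t • paste ξ b) / t := by gcongr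
        _ ≤ B := h2
    have hEt : E / t < QstarW W (t • ξ) (t • b) / t + ε / 4 := by
      rw [QstarW_eq]
      calc E / t < (sInf (ES W (t • ξ) (t • b)) + t * (ε / 4)) / t := by gcongr
        _ = sInf (ES W (t • ξ) (t • b)) / t + ε / 4 := by field_simp
    have hNK : N ≤ K := by
      have hpt : ∀ x, β' * ‖m x‖ ≤ W (t • m x) / t := fun x => by
        rw [le_div_iff₀ ht0]
        calc β' * ‖m x‖ * t = β' * (t * ‖m x‖) := by ring
          _ = β' * ‖t • m x‖ := by rw [norm_smul, Real.norm_eq_abs, abs_of_pos ht0]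
          _ ≤ W (t • m x) := hlower _
      have hint : β' * N ≤ E / t := by
        rw [hEeq2, ← integral_div, hN, ← integral_const_mul]
        exact integral_mono (integrableOn_cube3 (continuous_const.mul hmc.norm))
          (integrableOn_cube3 (((W_continuous hLip).comp (hmc.const_smul t)).div_const t)) hpt
      rw [hK, le_div_iff₀ hβ']
      nlinarith
    have h5 : Qinf ≤ ∫ x in cube3, recession W (m x) := by
      rw [hQinf, QstarW_eq]
      exact csInf_le (ES_bddBelow hrec0 _ _) (mem_ES (V := recession W) hadmφ)
    have h6 := (abs_le.mp (int_est hβ' hlower hupper hLip hC hr hH2 hmc ht)).1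
    have herrmono : (C * (t ^ (1 - r) / t)) * (1 + N) ≤ (C * (t ^ (1 - r) / t)) * (1 + K) := by
      have hCt : (0:ℝ) ≤ C * (t ^ (1 - r) / t) := by positivity
      nlinarith
    rw [← hEeq2] at h6
    linarith
  filter_upwards [hup, hlow] with t h1 h2
  rw [Real.dist_eq, abs_sub_lt_iff]
  constructor <;> linarith

end main

end Aux

theorem stmt9 (W : M33 → ℝ) (β' β L C r : ℝ) (hβ' : 0 < β') (hββ : β' ≤ β)
    (hlower : ∀ ξ : M33, β' * ‖ξ‖ ≤ W ξ)
    (hupper : ∀ ξ : M33, W ξ ≤ β * (1 + ‖ξ‖))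
    (hC : 0 < C) (hr : r ∈ Set.Ioo (0 : ℝ) 1)
    (hH2 : ∀ ξ : M33, |recession W ξ - W ξ| ≤ C * (1 + ‖ξ‖ ^ (1 - r)))
    (hLip : ∀ ξ ξ' : M33, |W ξ - W ξ'| ≤ L * ‖ξ - ξ'‖) :
    ∀ (z b : V3) (ν : X2), ν 0 ^ 2 + ν 1 ^ 2 = 1 →
      recession2 (QstarW W) (tens z ν) b = QstarW (recession W) (tens z ν) b := by
  intro z b ν _hν
  exact (main_tendsto hβ' hlower hupper hC hr hH2 hLip (tens z ν) b).limsup_eq
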